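/- Let (Ω, F, P) be a probability space with filtration (F_t)_{t≥0}, let (ξ_t)_{t≥1} be random variables with ξ_t F_t-measurable and |ξ_t| ≤ B almost surely for some constant B < ∞, and set μ_t := E[ξ_t | F_{t−1}]. Let (λ_t)_{t≥1} and (q_t)_{t≥0} be predictable sequences (λ_t and q_{t−1} are F_{t−1}-measurable) with 0 ≤ λ_t < 1 almost surely and ξ_t − q_{t−1} ≥ −1 almost surely. Define ψ_E(λ) := −log(1 − λ) − λ. Then the process M_T := exp( Σ_{t=1}^T [ λ_t·(ξ_t − μ_t) − (ξ_t − q_{t−1})²·ψ_E(λ_t) ] ), with M_0 := 1, is a nonnegative supermartingale with respect to (F_t). -/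

import Mathlib

open MeasureTheory ProbabilityTheory Filter


/-- ψ_E(l) = -log(1-l) - l ≥ 0 for 0 ≤ l < 1. -/
lemma psiE_nonneg {l : ℝ} (h0 : 0 ≤ l) (h1 : l < 1) : 0 ≤ -Real.log (1 - l) - l := by
  have := Real.log_le_sub_one_of_pos (x := 1 - l) (by linarith)
  linarith

/-- l² ≤ 2 ψ_E(l). -/
lemma two_psiE_ge {l : ℝ} (h0 : 0 ≤ l) (h1 : l < 1) :
    l ^ 2 ≤ 2 * (-Real.log (1 - l) - l) := by
  -- G t = -log(1-t) - t - t^2/2 is monotone on [0, l]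
  set G : ℝ → ℝ := fun t => -Real.log (1 - t) - t - t ^ 2 / 2 with hG
  have hmono : MonotoneOn G (Set.Icc 0 l) := by
    apply monotoneOn_of_hasDerivWithinAt_nonneg (f' := fun t => t ^ 2 / (1 - t))
      (convex_Icc 0 l)
    · apply ContinuousOn.sub
      apply ContinuousOn.sub
      · apply ContinuousOn.neg
        apply ContinuousOn.log
        · fun_prop
        · intro t ht
          simp only [Set.mem_Icc] at ht
          have : t < 1 := lt_of_le_of_lt ht.2 h1
          intro h; nlinarith [h]
      · fun_prop
      · fun_prop
    · intro t ht
      rw [interior_Icc] at ht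
      have ht1 : t < 1 := lt_of_lt_of_le ht.2 h1.le
      have hne : 1 - t ≠ 0 := by intro h; nlinarith [h]
      have hd : HasDerivAt G (-((-1) / (1 - t)) - 1 - 2 * t / 2) t := by
        have hlog : HasDerivAt (fun t : ℝ => Real.log (1 - t)) ((-1) / (1 - t)) t := by
          have : HasDerivAt (fun t : ℝ => 1 - t) (-1) t := by
            simpa using (hasDerivAt_id t).const_sub 1
          exact this.log hne
        have hsq : HasDerivAt (fun t : ℝ => t ^ 2 / 2) (2 * t / 2) t := by
          have := (hasDerivAt_pow 2 t).div_const 2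
          simpa using this
        exact (hlog.neg.sub (hasDerivAt_id t)).sub hsq
      have heq : -((-1) / (1 - t)) - 1 - 2 * t / 2 = t ^ 2 / (1 - t) := by
        field_simp; ring
      rw [heq] at hd
      exact hd.hasDerivWithinAt
    · intro t ht
      rw [interior_Icc] at ht
      have ht1 : t < 1 := lt_of_lt_of_le ht.2 h1.le
      have h2 : (0:ℝ) < 1 - t := by linarith
      positivity
  have h0m : G 0 ≤ G l := hmono (by simp [h0]) (by simp [h0]) h0
  simp only [hG, Real.log_one] at h0m
  norm_num at h0m
  linarith

lemma eb_hasDerivAt {l ψ y : ℝ} (h : 1 + l * y ≠ 0) :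
    HasDerivAt (fun y : ℝ => y ^ 2 * ψ - l * y + Real.log (1 + l * y))
      (2 * y * ψ - l + l / (1 + l * y)) y := by
  have h2 : HasDerivAt (fun y : ℝ => 1 + l * y) l y := by
    simpa using ((hasDerivAt_id y).const_mul l).const_add 1
  have hlog : HasDerivAt (fun y : ℝ => Real.log (1 + l * y)) (l / (1 + l * y)) y := h2.log h
  have h1 : HasDerivAt (fun y : ℝ => y ^ 2 * ψ) (2 * y * ψ) y := by
    have := (hasDerivAt_pow 2 y).mul_const ψ
    simpa using this
  have h3 : HasDerivAt (fun y : ℝ => l * y) l y := by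
    simpa using (hasDerivAt_id y).const_mul l
  exact (h1.sub h3).add hlog

lemma eb_F_nonneg {l x : ℝ} (h0 : 0 ≤ l) (h1 : l < 1) (hx : -1 ≤ x) :
    0 ≤ x ^ 2 * (-Real.log (1 - l) - l) - l * x + Real.log (1 + l * x) := by
  set ψ := -Real.log (1 - l) - l with hψ
  have hψ0 : 0 ≤ ψ := psiE_nonneg h0 h1
  have h2ψ : l ^ 2 ≤ 2 * ψ := two_psiE_ge h0 h1
  set F : ℝ → ℝ := fun y => y ^ 2 * ψ - l * y + Real.log (1 + l * y) with hF
  have hpos : ∀ y : ℝ, -1 ≤ y → 0 < 1 + l * y := by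
    intro y hy
    rcases le_or_gt y 0 with h | h
    · nlinarith
    · nlinarith
  have hcont : ContinuousOn F (Set.Ici (-1 : ℝ)) := by
    apply ContinuousOn.add
    · fun_prop
    · apply ContinuousOn.log
      · fun_prop
      · intro y hy
        exact (hpos y hy).ne'
  have hderiv : ∀ y : ℝ, -1 < y →
      HasDerivAt F (y * (2 * ψ - l ^ 2 / (1 + l * y))) y := by
    intro y hy
    have hp : 0 < 1 + l * y := hpos y hy.le
    have := eb_hasDerivAt (l := l) (ψ := ψ) (y := y) hp.ne'
    have heq : 2 * y * ψ - l + l / (1 + l * y) = y * (2 * ψ - l ^ 2 / (1 + l * y)) := by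
      linear_combination l * mul_inv_cancel₀ hp.ne'
    rw [heq] at this
    exact this
  have hF0 : F 0 = 0 := by simp [hF]
  have hFm1 : F (-1) = 0 := by
    simp only [hF, hψ]
    have : 1 + l * (-1) = 1 - l := by ring
    rw [this]
    ring
  have goal : 0 ≤ F x := by
    rcases le_or_gt 0 x with hx0 | hx0
    · -- monotone on [0, x]
      have hmono : MonotoneOn F (Set.Icc 0 x) := by
        apply monotoneOn_of_hasDerivWithinAt_nonneg
          (f' := fun y => y * (2 * ψ - l ^ 2 / (1 + l * y))) (convex_Icc 0 x)
        · exact hcont.mono (fun y hy => le_trans (by norm_num) hy.1)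
        · intro y hy
          rw [interior_Icc] at hy
          exact (hderiv y (by linarith [hy.1])).hasDerivWithinAt
        · intro y hy
          rw [interior_Icc] at hy
          have hy0 : 0 < y := hy.1
          have h1y : (1 : ℝ) ≤ 1 + l * y := by nlinarith
          have : l ^ 2 / (1 + l * y) ≤ l ^ 2 := div_le_self (sq_nonneg l) h1y
          nlinarith
      have := hmono (Set.left_mem_Icc.2 hx0) (Set.right_mem_Icc.2 hx0) hx0
      rw [hF0] at this
      exact this
    · rcases le_or_gt 0 (2 * ψ - l ^ 2 / (1 + l * x)) with hh | hh
      · -- antitone on [x, 0]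
        have hanti : AntitoneOn F (Set.Icc x 0) := by
          apply antitoneOn_of_hasDerivWithinAt_nonpos
            (f' := fun y => y * (2 * ψ - l ^ 2 / (1 + l * y))) (convex_Icc x 0)
          · exact hcont.mono (fun y hy => le_trans hx hy.1)
          · intro y hy
            rw [interior_Icc] at hy
            exact (hderiv y (by linarith [hy.1])).hasDerivWithinAt
          · intro y hy
            rw [interior_Icc] at hy
            have hpx : 0 < 1 + l * x := hpos x hx
            have hpy : 0 < 1 + l * y := hpos y (by linarith [hy.1])
            have hle : 1 + l * x ≤ 1 + l * y := by nlinarith [hy.1]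
            have : l ^ 2 / (1 + l * y) ≤ l ^ 2 / (1 + l * x) :=
              div_le_div_of_nonneg_left (sq_nonneg l) hpx hle |>.trans_eq rfl
            have hfac : 0 ≤ 2 * ψ - l ^ 2 / (1 + l * y) := by linarith
            have hy0 : y ≤ 0 := hy.2.le
            exact mul_nonpos_of_nonpos_of_nonneg hy0 hfac
        have := hanti (Set.left_mem_Icc.2 hx0.le) (Set.right_mem_Icc.2 hx0.le) hx0.le
        rw [hF0] at this
        exact this
      · -- monotone on [-1, x]
        have hmono : MonotoneOn F (Set.Icc (-1) x) := by
          apply monotoneOn_of_hasDerivWithinAt_nonneg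
            (f' := fun y => y * (2 * ψ - l ^ 2 / (1 + l * y))) (convex_Icc (-1) x)
          · exact hcont.mono (fun y hy => hy.1)
          · intro y hy
            rw [interior_Icc] at hy
            exact (hderiv y hy.1).hasDerivWithinAt
          · intro y hy
            rw [interior_Icc] at hy
            have hpx : 0 < 1 + l * x := hpos x hx
            have hpy : 0 < 1 + l * y := hpos y hy.1.le
            have hle : 1 + l * y ≤ 1 + l * x := by nlinarith [hy.2]
            have : l ^ 2 / (1 + l * x) ≤ l ^ 2 / (1 + l * y) :=
              div_le_div_of_nonneg_left (sq_nonneg l) hpy hle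
            have hfac : 2 * ψ - l ^ 2 / (1 + l * y) ≤ 0 := by linarith
            have hy0 : y ≤ 0 := by linarith [hy.2, hx0]
            exact mul_nonneg_of_nonpos_of_nonpos hy0 hfac
        have := hmono (Set.left_mem_Icc.2 hx) (Set.right_mem_Icc.2 hx) hx
        rw [hFm1] at this
        exact this
  exact goal

lemma eb_core {l x : ℝ} (h0 : 0 ≤ l) (h1 : l < 1) (hx : -1 ≤ x) :
    Real.exp (l * x - x ^ 2 * (-Real.log (1 - l) - l)) ≤ 1 + l * x := by
  have hp : 0 < 1 + l * x := by
    rcases le_or_gt x 0 with h | h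
    · nlinarith
    · nlinarith
  rw [← Real.exp_log hp]
  apply Real.exp_le_exp.2
  have := eb_F_nonneg h0 h1 hx
  linarith

lemma eb_g_le {l x m qq B : ℝ} (hx : |x| ≤ B) (hm : |m| ≤ B) (hl0 : 0 ≤ l) (hl1 : l < 1) :
    l * (x - m) - (x - qq) ^ 2 * (-Real.log (1 - l) - l) ≤ 2 * B := by
  have hψ := psiE_nonneg hl0 hl1
  have h1 := abs_le.1 hx
  have h2 := abs_le.1 hm
  have key : l * (x - m) ≤ 2 * B := by
    rcases le_or_gt 0 (x - m) with h | h
    · nlinarith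
    · nlinarith
  nlinarith [mul_nonneg (sq_nonneg (x - qq)) hψ]

lemma eb_Y_le_W {l x m qq : ℝ} (hl0 : 0 ≤ l) (hl1 : l < 1) (hxq : -1 ≤ x - qq) :
    Real.exp (l * (x - m) - (x - qq) ^ 2 * (-Real.log (1 - l) - l))
      ≤ Real.exp (l * (qq - m)) * (1 + l * (x - qq)) := by
  have hcore := eb_core hl0 hl1 hxq
  have heq : l * (x - m) - (x - qq) ^ 2 * (-Real.log (1 - l) - l)
      = l * (qq - m) + (l * (x - qq) - (x - qq) ^ 2 * (-Real.log (1 - l) - l)) := by ring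
  rw [heq, Real.exp_add]
  exact mul_le_mul_of_nonneg_left hcore (Real.exp_nonneg _)

lemma eb_W_bound {l x m qq B : ℝ} (hx : |x| ≤ B) (hm : |m| ≤ B) (hl0 : 0 ≤ l) (hl1 : l < 1)
    (hxq : -1 ≤ x - qq) :
    |Real.exp (l * (qq - m)) * (1 + l * (x - qq))| ≤ Real.exp (2 * B) := by
  have h1 : 0 ≤ 1 + l * (x - qq) := by nlinarith
  rw [abs_of_nonneg (mul_nonneg (Real.exp_nonneg _) h1)]
  have h2 : 1 + l * (x - qq) ≤ Real.exp (l * (x - qq)) := by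
    have := Real.add_one_le_exp (l * (x - qq)); linarith
  have h3 : Real.exp (l * (qq - m)) * (1 + l * (x - qq))
      ≤ Real.exp (l * (qq - m)) * Real.exp (l * (x - qq)) :=
    mul_le_mul_of_nonneg_left h2 (Real.exp_nonneg _)
  rw [← Real.exp_add] at h3
  refine h3.trans (Real.exp_le_exp.2 ?_)
  have ha := abs_le.1 hx
  have hb := abs_le.1 hm
  have heq : l * (qq - m) + l * (x - qq) = l * (x - m) := by ring
  rw [heq]
  rcases le_or_gt 0 (x - m) with h | h
  · nlinarith
  · nlinarith

lemma eb_a_le {l x m qq B : ℝ} (hx : |x| ≤ B) (hm : |m| ≤ B) (hl0 : 0 ≤ l) (hl1 : l < 1)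
    (hxq : -1 ≤ x - qq) : l * (qq - m) ≤ 2 * B + 1 := by
  have h1 := abs_le.1 hx
  have h2 := abs_le.1 hm
  rcases le_or_gt 0 (qq - m) with h | h
  · nlinarith
  · nlinarith

lemma eb_Gx_bound {l x m qq B : ℝ} (hx : |x| ≤ B) (hm : |m| ≤ B) (hl0 : 0 ≤ l) (hl1 : l < 1)
    (hxq : -1 ≤ x - qq) :
    |l * Real.exp (l * (qq - m)) * x| ≤ B * Real.exp (2 * B + 1) := by
  have he : Real.exp (l * (qq - m)) ≤ Real.exp (2 * B + 1) :=
    Real.exp_le_exp.2 (eb_a_le hx hm hl0 hl1 hxq)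
  rw [abs_mul, abs_mul, abs_of_nonneg hl0, abs_of_nonneg (Real.exp_nonneg _)]
  have h4 : Real.exp (l * (qq - m)) * |x| ≤ Real.exp (2 * B + 1) * B :=
    mul_le_mul he hx (abs_nonneg _) (Real.exp_nonneg _)
  have h5 : l * (Real.exp (l * (qq - m)) * |x|) ≤ 1 * (Real.exp (2 * B + 1) * B) :=
    mul_le_mul hl1.le h4 (mul_nonneg (Real.exp_nonneg _) (abs_nonneg _)) zero_le_one
  nlinarith [h5]

lemma eb_G_bound {l m qq B : ℝ} (hx : |m| ≤ B) (hl0 : 0 ≤ l) (hl1 : l < 1)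
    (ha : l * (qq - m) ≤ 2 * B + 1) :
    |l * Real.exp (l * (qq - m))| ≤ Real.exp (2 * B + 1) := by
  have he : Real.exp (l * (qq - m)) ≤ Real.exp (2 * B + 1) := Real.exp_le_exp.2 ha
  rw [abs_mul, abs_of_nonneg hl0, abs_of_nonneg (Real.exp_nonneg _)]
  nlinarith [Real.exp_nonneg (l * (qq - m))]

lemma eb_H_bound {l x m qq B : ℝ} (hx : |x| ≤ B) (hm : |m| ≤ B) (hl0 : 0 ≤ l) (hl1 : l < 1)
    (hxq : -1 ≤ x - qq) (hB : 0 ≤ B) :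
    |Real.exp (l * (qq - m)) * (1 - l * qq)| ≤ (B + 2) * Real.exp (2 * B + 1) := by
  have h1 := abs_le.1 hx
  have h2 := abs_le.1 hm
  have hsle : l * qq ≤ B + 1 := by
    rcases le_or_gt 0 qq with h | h
    · nlinarith
    · nlinarith
  have hrw : Real.exp (l * (qq - m)) * (1 - l * qq)
      = Real.exp (-(l * m)) * (Real.exp (l * qq) * (1 - l * qq)) := by
    rw [show Real.exp (-(l * m)) * (Real.exp (l * qq) * (1 - l * qq))
        = (Real.exp (-(l * m)) * Real.exp (l * qq)) * (1 - l * qq) from by ring,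
      ← Real.exp_add, show -(l * m) + l * qq = l * (qq - m) from by ring]
  rw [hrw, abs_mul]
  have hphi : |Real.exp (l * qq) * (1 - l * qq)| ≤ (B + 2) * Real.exp (B + 1) := by
    set s := l * qq with hs
    rcases le_or_gt s 0 with h | h
    · have hnn : 0 ≤ Real.exp s * (1 - s) := mul_nonneg (Real.exp_nonneg _) (by linarith)
      rw [abs_of_nonneg hnn]
      have hb2 : (1 - s) ≤ Real.exp (-s) := by
        have := Real.add_one_le_exp (-s); linarith
      have hb3 : Real.exp s * (1 - s) ≤ Real.exp s * Real.exp (-s) :=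
        mul_le_mul_of_nonneg_left hb2 (Real.exp_nonneg _)
      rw [← Real.exp_add] at hb3
      simp only [add_neg_cancel, Real.exp_zero] at hb3
      have hb4 : (1 : ℝ) ≤ (B + 2) * Real.exp (B + 1) := by
        have := Real.one_le_exp (by linarith : (0 : ℝ) ≤ B + 1)
        nlinarith
      linarith
    · rw [abs_mul, abs_of_nonneg (Real.exp_nonneg _)]
      have hb1 : |1 - s| ≤ B + 2 := by
        rw [abs_le]; constructor <;> linarith
      have hb2 : Real.exp s ≤ Real.exp (B + 1) := Real.exp_le_exp.2 (by linarith)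
      have := mul_le_mul hb2 hb1 (abs_nonneg _) (Real.exp_nonneg _)
      nlinarith
  have hexp : |Real.exp (-(l * m))| ≤ Real.exp B := by
    rw [abs_of_nonneg (Real.exp_nonneg _)]
    apply Real.exp_le_exp.2
    rcases le_or_gt 0 m with h | h
    · nlinarith
    · nlinarith
  have hmul : |Real.exp (-(l * m))| * |Real.exp (l * qq) * (1 - l * qq)|
      ≤ Real.exp B * ((B + 2) * Real.exp (B + 1)) :=
    mul_le_mul hexp hphi (abs_nonneg _) (Real.exp_nonneg _)
  have heq : Real.exp B * ((B + 2) * Real.exp (B + 1)) = (B + 2) * Real.exp (2 * B + 1) := by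
    rw [show Real.exp B * ((B + 2) * Real.exp (B + 1))
        = (B + 2) * (Real.exp B * Real.exp (B + 1)) from by ring, ← Real.exp_add]
    ring_nf
  rw [heq] at hmul
  exact hmul

lemma eb_final (l m qq : ℝ) :
    l * Real.exp (l * (qq - m)) * m + Real.exp (l * (qq - m)) * (1 - l * qq) ≤ 1 := by
  have h1 : l * Real.exp (l * (qq - m)) * m + Real.exp (l * (qq - m)) * (1 - l * qq)
      = Real.exp (l * (qq - m)) * (1 - l * (qq - m)) := by ring
  rw [h1]
  have h2 : 1 - l * (qq - m) ≤ Real.exp (-(l * (qq - m))) := by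
    have := Real.add_one_le_exp (-(l * (qq - m))); linarith
  have h3 : Real.exp (l * (qq - m)) * (1 - l * (qq - m))
      ≤ Real.exp (l * (qq - m)) * Real.exp (-(l * (qq - m))) :=
    mul_le_mul_of_nonneg_left h2 (Real.exp_nonneg _)
  rw [← Real.exp_add] at h3
  simpa using h3


section Main

variable {Ω : Type*} {m0 : MeasurableSpace Ω} (μ : Measure Ω) [IsProbabilityMeasure μ]
  (ℱ : Filtration ℕ m0) (ξ lam q : ℕ → Ω → ℝ) (B : ℝ)

/-- the increment of the exponent -/
noncomputable def ebg : ℕ → Ω → ℝ := fun t ω =>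
  lam t ω * (ξ t ω - (μ[ξ t | ℱ (t - 1)]) ω)
    - (ξ t ω - q (t - 1) ω) ^ 2 * (-Real.log (1 - lam t ω) - lam t ω)

theorem eb_main
    (hadapted : ∀ t, Measurable[ℱ t] (ξ t))
    (hξbd : ∀ t, ∀ᵐ ω ∂μ, |ξ t ω| ≤ B)
    (hlampred : ∀ t, 1 ≤ t → Measurable[ℱ (t - 1)] (lam t))
    (hqpred : ∀ t, Measurable[ℱ t] (q t))
    (hlam : ∀ t, 1 ≤ t → ∀ᵐ ω ∂μ, lam t ω ∈ Set.Ico (0 : ℝ) 1)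
    (hq : ∀ t, 1 ≤ t → ∀ᵐ ω ∂μ, -1 ≤ ξ t ω - q (t - 1) ω) :
    Supermartingale
      (fun T ω => Real.exp (∑ t ∈ Finset.Icc 1 T, ebg μ ℱ ξ lam q t ω)) ℱ μ := by
  classical
  set g : ℕ → Ω → ℝ := ebg μ ℱ ξ lam q with hgdef
  -- B is nonnegative
  haveI : (ae μ).NeBot := ae_neBot.2 (IsProbabilityMeasure.ne_zero μ)
  have hB : 0 ≤ B := by
    obtain ⟨ω, hω⟩ := (hξbd 0).exists
    exact (abs_nonneg _).trans hω
  -- a.e. bound for the conditional means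
  have hm_bd : ∀ t, ∀ᵐ ω ∂μ, |(μ[ξ t | ℱ (t - 1)]) ω| ≤ B := by
    intro t
    have h := ae_bdd_condExp_of_ae_bdd (m := ℱ (t - 1)) (μ := μ) (R := ⟨B, hB⟩)
      (hξbd t)
    exact h
  -- measurability of the increments
  have hmg : ∀ t n : ℕ, 1 ≤ t → t ≤ n → Measurable[ℱ n] (g t) := by
    intro t n ht htn
    have hξm : Measurable[ℱ n] (ξ t) := (hadapted t).mono (ℱ.mono htn) le_rfl
    have hmm : Measurable[ℱ n] (μ[ξ t | ℱ (t - 1)]) :=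
      ((stronglyMeasurable_condExp).mono (ℱ.mono ((Nat.sub_le t 1).trans htn))).measurable
    have hlm : Measurable[ℱ n] (lam t) :=
      (hlampred t ht).mono (ℱ.mono ((Nat.sub_le t 1).trans htn)) le_rfl
    have hqm : Measurable[ℱ n] (q (t - 1)) :=
      (hqpred (t - 1)).mono (ℱ.mono ((Nat.sub_le t 1).trans htn)) le_rfl
    exact (hlm.mul (hξm.sub hmm)).sub
      (((hξm.sub hqm).pow_const 2).mul
        (((Real.measurable_log.comp (measurable_const.sub hlm)).neg).sub hlm))
  -- adaptedness
  have hadp : StronglyAdapted ℱ (fun n ω => Real.exp (∑ t ∈ Finset.Icc 1 n, g t ω)) := by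
    intro n
    apply Measurable.stronglyMeasurable
    exact Real.measurable_exp.comp
      (Finset.measurable_sum _ fun t ht =>
        hmg t n (Finset.mem_Icc.1 ht).1 (Finset.mem_Icc.1 ht).2)
  -- integrability
  have hint : ∀ n, Integrable (fun ω => Real.exp (∑ t ∈ Finset.Icc 1 n, g t ω)) μ := by
    intro n
    refine Integrable.mono' (integrable_const (Real.exp ((n : ℝ) * (2 * B))))
      (((hadp n).mono (ℱ.le n)).aestronglyMeasurable) ?_
    have hae : ∀ᵐ ω ∂μ, ∀ t ∈ Finset.Icc 1 n, g t ω ≤ 2 * B := by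
      rw [Filter.eventually_all_finset]
      intro t ht
      have ht1 : 1 ≤ t := (Finset.mem_Icc.1 ht).1
      filter_upwards [hξbd t, hm_bd t, hlam t ht1] with ω h1 h2 h3
      exact eb_g_le h1 h2 h3.1 h3.2
    filter_upwards [hae] with ω hω
    rw [Real.norm_eq_abs, abs_of_nonneg (Real.exp_nonneg _)]
    apply Real.exp_le_exp.2
    calc ∑ t ∈ Finset.Icc 1 n, g t ω ≤ ∑ _t ∈ Finset.Icc 1 n, (2 * B) :=
          Finset.sum_le_sum hω
      _ = ((Finset.Icc 1 n).card : ℝ) * (2 * B) := by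
          rw [Finset.sum_const, nsmul_eq_mul]
      _ ≤ (n : ℝ) * (2 * B) := by
          rw [Nat.card_Icc]
          simp only [Nat.add_sub_cancel]
          exact le_refl _
  -- the one-step supermartingale property
  have hstep : ∀ T : ℕ,
      μ[(fun ω => Real.exp (∑ t ∈ Finset.Icc 1 (T + 1), g t ω)) | ℱ T]
        ≤ᵐ[μ] (fun ω => Real.exp (∑ t ∈ Finset.Icc 1 T, g t ω)) := by
    intro T
    have h1T : (1 : ℕ) ≤ T + 1 := Nat.le_add_left 1 T
    -- normalized hypotheses at time T+1
    have hlT := hlam (T + 1) h1T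
    have hqT := hq (T + 1) h1T
    simp only [Nat.add_sub_cancel] at hqT
    have hmbd := hm_bd (T + 1)
    simp only [Nat.add_sub_cancel] at hmbd
    have hxbd := hξbd (T + 1)
    -- abbreviations
    set l : Ω → ℝ := lam (T + 1) with hldef
    set x : Ω → ℝ := ξ (T + 1) with hxdef
    set qq : Ω → ℝ := q T with hqqdef
    set m : Ω → ℝ := μ[ξ (T + 1) | ℱ T] with hmdef
    set Y : Ω → ℝ := fun ω =>
      Real.exp (l ω * (x ω - m ω) - (x ω - qq ω) ^ 2 * (-Real.log (1 - l ω) - l ω))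
      with hYdef
    set W : Ω → ℝ := fun ω =>
      Real.exp (l ω * (qq ω - m ω)) * (1 + l ω * (x ω - qq ω)) with hWdef
    set G : Ω → ℝ := fun ω => l ω * Real.exp (l ω * (qq ω - m ω)) with hGdef
    set H : Ω → ℝ := fun ω => Real.exp (l ω * (qq ω - m ω)) * (1 - l ω * qq ω) with hHdef
    -- measurability
    have hlm : Measurable[ℱ T] l := hlampred (T + 1) h1T
    have hqm : Measurable[ℱ T] qq := hqpred T
    have hmm : Measurable[ℱ T] m := stronglyMeasurable_condExp.measurable
    have hlm0 : Measurable l := hlm.mono (ℱ.le T) le_rfl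
    have hqm0 : Measurable qq := hqm.mono (ℱ.le T) le_rfl
    have hmm0 : Measurable m := hmm.mono (ℱ.le T) le_rfl
    have hxm0 : Measurable x := (hadapted (T + 1)).mono (ℱ.le (T + 1)) le_rfl
    have hYm : Measurable Y := by
      rw [hYdef]
      exact Real.measurable_exp.comp
        ((hlm0.mul (hxm0.sub hmm0)).sub
          (((hxm0.sub hqm0).pow_const 2).mul
            (((Real.measurable_log.comp (measurable_const.sub hlm0)).neg).sub hlm0)))
    have hWm : Measurable W := by
      rw [hWdef]
      exact (Real.measurable_exp.comp (hlm0.mul (hqm0.sub hmm0))).mul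
        (measurable_const.add (hlm0.mul (hxm0.sub hqm0)))
    have hGsm : StronglyMeasurable[ℱ T] G := by
      rw [hGdef]
      exact (hlm.mul (Real.measurable_exp.comp (hlm.mul (hqm.sub hmm)))).stronglyMeasurable
    have hHsm : StronglyMeasurable[ℱ T] H := by
      rw [hHdef]
      exact ((Real.measurable_exp.comp (hlm.mul (hqm.sub hmm))).mul
        (measurable_const.sub (hlm.mul hqm))).stronglyMeasurable
    -- integrabilities
    have hintx : Integrable x μ := by
      refine Integrable.mono' (integrable_const B) hxm0.aestronglyMeasurable ?_
      filter_upwards [hxbd] with ω h using by rwa [Real.norm_eq_abs]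
    have hintY : Integrable Y μ := by
      refine Integrable.mono' (integrable_const (Real.exp (2 * B)))
        hYm.aestronglyMeasurable ?_
      filter_upwards [hxbd, hmbd, hlT] with ω h1 h2 h3
      rw [Real.norm_eq_abs, hYdef, abs_of_nonneg (Real.exp_nonneg _)]
      exact Real.exp_le_exp.2 (eb_g_le h1 h2 h3.1 h3.2)
    have hintW : Integrable W μ := by
      refine Integrable.mono' (integrable_const (Real.exp (2 * B)))
        hWm.aestronglyMeasurable ?_
      filter_upwards [hxbd, hmbd, hlT, hqT] with ω h1 h2 h3 h4
      rw [Real.norm_eq_abs, hWdef]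
      exact eb_W_bound h1 h2 h3.1 h3.2 h4
    have hintGx : Integrable (fun ω => G ω * x ω) μ := by
      refine Integrable.mono' (integrable_const (B * Real.exp (2 * B + 1)))
        (((hGsm.measurable.mono (ℱ.le T) le_rfl).mul hxm0).aestronglyMeasurable) ?_
      filter_upwards [hxbd, hmbd, hlT, hqT] with ω h1 h2 h3 h4
      rw [Real.norm_eq_abs, hGdef]
      exact eb_Gx_bound h1 h2 h3.1 h3.2 h4
    have hintH : Integrable H μ := by
      refine Integrable.mono' (integrable_const ((B + 2) * Real.exp (2 * B + 1)))
        ((hHsm.measurable.mono (ℱ.le T) le_rfl).aestronglyMeasurable) ?_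
      filter_upwards [hxbd, hmbd, hlT, hqT] with ω h1 h2 h3 h4
      rw [Real.norm_eq_abs, hHdef]
      exact eb_H_bound h1 h2 h3.1 h3.2 h4 hB
    -- splitting of the exponential process
    have hfsplit : (fun ω => Real.exp (∑ t ∈ Finset.Icc 1 (T + 1), g t ω))
        = fun ω => Real.exp (∑ t ∈ Finset.Icc 1 T, g t ω) * Y ω := by
      funext ω
      rw [Finset.sum_Icc_succ_top h1T, Real.exp_add]
      congr 1
    -- the key conditional bound: E[Y | ℱ T] ≤ 1 a.e.
    have hcondY : μ[Y | ℱ T] ≤ᵐ[μ] fun _ => (1 : ℝ) := by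
      have h1 : μ[Y | ℱ T] ≤ᵐ[μ] μ[W | ℱ T] := by
        refine condExp_mono hintY hintW ?_
        filter_upwards [hlT, hqT] with ω h3 h4
        rw [hYdef, hWdef]
        exact eb_Y_le_W h3.1 h3.2 h4
      have hWsum : W = (fun ω => G ω * x ω) + H := by
        funext ω
        simp only [hWdef, hGdef, hHdef, Pi.add_apply]
        ring
      have h2 : μ[W | ℱ T] =ᵐ[μ] fun ω => G ω * m ω + H ω := by
        rw [hWsum]
        refine (condExp_add hintGx hintH (ℱ T)).trans ?_
        have h2a : μ[(fun ω => G ω * x ω) | ℱ T] =ᵐ[μ] fun ω => G ω * m ω := by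
          have := condExp_mul_of_stronglyMeasurable_left hGsm
            (show Integrable (G * x) μ from hintGx) hintx
          exact this
        have h2b : μ[H | ℱ T] = H := condExp_of_stronglyMeasurable (ℱ.le T) hHsm hintH
        filter_upwards [h2a] with ω hω
        simp only [Pi.add_apply, hω, h2b]
      have h3 : (fun ω => G ω * m ω + H ω) ≤ᵐ[μ] fun _ => (1 : ℝ) := by
        refine Eventually.of_forall fun ω => ?_
        simp only [hGdef, hHdef]
        exact eb_final (l ω) (m ω) (qq ω)
      exact h1.trans (h2.trans_le h3)
    -- putting it together
    rw [hfsplit]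
    have hmul : μ[(fun ω => Real.exp (∑ t ∈ Finset.Icc 1 T, g t ω) * Y ω) | ℱ T]
        =ᵐ[μ] (fun ω => Real.exp (∑ t ∈ Finset.Icc 1 T, g t ω)) * μ[Y | ℱ T] := by
      refine condExp_mul_of_stronglyMeasurable_left (hadp T) ?_ hintY
      have := hint (T + 1)
      rw [hfsplit] at this
      exact this
    refine hmul.trans_le ?_
    filter_upwards [hcondY] with ω hω
    simp only [Pi.mul_apply]
    calc Real.exp (∑ t ∈ Finset.Icc 1 T, g t ω) * (μ[Y | ℱ T]) ω
        ≤ Real.exp (∑ t ∈ Finset.Icc 1 T, g t ω) * 1 :=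
          mul_le_mul_of_nonneg_left hω (Real.exp_nonneg _)
      _ = Real.exp (∑ t ∈ Finset.Icc 1 T, g t ω) := mul_one _
  exact supermartingale_nat hadp hint hstep

end Main

/-- The empirical-Bernstein exponential process is a nonnegative test
supermartingale. -/
theorem empirical_bernstein_supermartingale
    {Ω : Type*} {m0 : MeasurableSpace Ω} (μ : Measure Ω) [IsProbabilityMeasure μ]
    (ℱ : Filtration ℕ m0) (ξ lam q : ℕ → Ω → ℝ) (B : ℝ)
    (hadapted : ∀ t, Measurable[ℱ t] (ξ t))
    (hξbd : ∀ t, ∀ᵐ ω ∂μ, |ξ t ω| ≤ B)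
    (hlampred : ∀ t, 1 ≤ t → Measurable[ℱ (t - 1)] (lam t))
    (hqpred : ∀ t, Measurable[ℱ t] (q t))
    (hlam : ∀ t, 1 ≤ t → ∀ᵐ ω ∂μ, lam t ω ∈ Set.Ico (0 : ℝ) 1)
    (hq : ∀ t, 1 ≤ t → ∀ᵐ ω ∂μ, -1 ≤ ξ t ω - q (t - 1) ω) :
    Supermartingale (fun T ω => Real.exp (∑ t ∈ Finset.Icc 1 T,
        (lam t ω * (ξ t ω - (μ[ξ t | ℱ (t - 1)]) ω)
          - (ξ t ω - q (t - 1) ω) ^ 2 * (-Real.log (1 - lam t ω) - lam t ω)))) ℱ μ ∧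
      (∀ T ω, 0 ≤ Real.exp (∑ t ∈ Finset.Icc 1 T,
        (lam t ω * (ξ t ω - (μ[ξ t | ℱ (t - 1)]) ω)
          - (ξ t ω - q (t - 1) ω) ^ 2 * (-Real.log (1 - lam t ω) - lam t ω)))) ∧
      (∀ ω, Real.exp (∑ t ∈ Finset.Icc 1 0,
        (lam t ω * (ξ t ω - (μ[ξ t | ℱ (t - 1)]) ω)
          - (ξ t ω - q (t - 1) ω) ^ 2 * (-Real.log (1 - lam t ω) - lam t ω))) = 1) := by
  refine ⟨?_, fun T ω => Real.exp_nonneg _, fun ω => by simp⟩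
  exact eb_main μ ℱ ξ lam q B hadapted hξbd hlampred hqpred hlam hq
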